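/- With F^s and F^{s,j}_{Q_k} as above, fix s₀ ≥ 2 and Q_k ∈ F^{s₀}. Then the Lebesgue measure of F^{s,j}_{Q_k} satisfies |F^{s,j}_{Q_k}| ≤ C·2^{(−s₀+j)(n−1)−s}, where C depends only on n and K. -/

import Mathlib

open Set Metric MeasureTheory

def cube (n : ℕ) (c : EuclideanSpace ℝ (Fin n)) (r : ℝ) : Set (EuclideanSpace ℝ (Fin n)) :=
  {x | ∀ i, |x i - c i| ≤ r}

noncomputable def sDist {α : Type*} [PseudoMetricSpace α] (s t : Set α) : ℝ :=
  sInf {d : ℝ | ∃ x ∈ s, ∃ y ∈ t, d = dist x y}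

def IsWhitneyOf (n : ℕ) (Ω : Set (EuclideanSpace ℝ (Fin n)))
    (c : ℕ → EuclideanSpace ℝ (Fin n)) (r : ℕ → ℝ) : Prop :=
  (∀ k, 0 < r k) ∧
  Ω = ⋃ k, cube n (c k) (r k) ∧
  (∀ k l, k ≠ l → interior (cube n (c k) (r k)) ∩ interior (cube n (c l) (r l)) = ∅) ∧
  (∀ k, Metric.diam (cube n (c k) (r k)) ≤ sDist (cube n (c k) (r k)) (frontier Ω) ∧
    sDist (cube n (c k) (r k)) (frontier Ω) ≤ 4 * Metric.diam (cube n (c k) (r k)))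

def IsLipGraphDomain (d : ℕ) (K : ℝ) (Ω : Set (EuclideanSpace ℝ (Fin (d + 1))))
    (φ : EuclideanSpace ℝ (Fin d) → ℝ) : Prop :=
  (∀ x' ∈ ball (0 : EuclideanSpace ℝ (Fin d)) 1, |φ x'| ≤ K) ∧
  (∀ x' ∈ ball (0 : EuclideanSpace ℝ (Fin d)) 1, ∀ y' ∈ ball (0 : EuclideanSpace ℝ (Fin d)) 1,
    |φ x' - φ y'| ≤ K * dist x' y') ∧
  Ω ∩ ball 0 1 =
    {x : EuclideanSpace ℝ (Fin (d + 1)) | φ (WithLp.toLp 2 (fun i : Fin d => x i.castSucc)) < x (Fin.last d)} ∩ ball 0 1 ∧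
  frontier Ω ∩ ball 0 1 =
    {x : EuclideanSpace ℝ (Fin (d + 1)) | x (Fin.last d) = φ (WithLp.toLp 2 (fun i : Fin d => x i.castSucc))} ∩ ball 0 1

/-- Membership of the `k`-th Whitney cube in the family `F^s`:
`2^{-s-1} < d_k ≤ 2^{-s}` and `Q̃_k ⊆ Ω ∩ B_{1/4}`. -/
def memF (d : ℕ) (Ω : Set (EuclideanSpace ℝ (Fin (d + 1))))
    (c : ℕ → EuclideanSpace ℝ (Fin (d + 1))) (r : ℕ → ℝ) (s : ℤ) (k : ℕ) : Prop :=
  (2 : ℝ) ^ (-s - 1) < Metric.diam (cube (d + 1) (c k) (r k)) ∧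
  Metric.diam (cube (d + 1) (c k) (r k)) ≤ (2 : ℝ) ^ (-s) ∧
  cube (d + 1) (c k) (6 / 5 * r k) ⊆ Ω ∩ ball 0 (1 / 4)

/-- Membership of the `l`-th Whitney cube in the family `F^{s,j}_{Q_k}`, for a fixed
reference cube `Q_k ∈ F^{s₀}`: `Q_l ∈ F^s` with `dist(Q_l, Q_k) ≤ 2^{-s₀+5}` when `j = 0`,
and `2^{-s₀+j+4} < dist(Q_l, Q_k) ≤ 2^{-s₀+j+5}` when `j ≥ 1`. -/
def memFsj (d : ℕ) (Ω : Set (EuclideanSpace ℝ (Fin (d + 1))))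
    (c : ℕ → EuclideanSpace ℝ (Fin (d + 1))) (r : ℕ → ℝ)
    (s₀ : ℤ) (k : ℕ) (s : ℤ) (j : ℕ) (l : ℕ) : Prop :=
  memF d Ω c r s l ∧
    (if j = 0 then
      sDist (cube (d + 1) (c l) (r l)) (cube (d + 1) (c k) (r k)) ≤ (2 : ℝ) ^ (-s₀ + 5)
    else
      (2 : ℝ) ^ (-s₀ + (j : ℤ) + 4) <
          sDist (cube (d + 1) (c l) (r l)) (cube (d + 1) (c k) (r k)) ∧
        sDist (cube (d + 1) (c l) (r l)) (cube (d + 1) (c k) (r k)) ≤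
          (2 : ℝ) ^ (-s₀ + (j : ℤ) + 5))


section Aux

open Real

lemma coord_abs_le_dist {m : ℕ} (x y : EuclideanSpace ℝ (Fin m)) (i : Fin m) :
    |x i - y i| ≤ dist x y := by
  rw [EuclideanSpace.dist_eq, ← Real.dist_eq]
  rw [← Real.sqrt_sq (dist_nonneg (x := x i) (y := y i))]
  exact Real.sqrt_le_sqrt (Finset.single_le_sum (f := fun j => dist (x j) (y j) ^ 2)
    (fun j _ => sq_nonneg _) (Finset.mem_univ i))

lemma proj_dist_le_dist {d : ℕ} (x y : EuclideanSpace ℝ (Fin (d+1))) :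
    dist (show EuclideanSpace ℝ (Fin d) from WithLp.toLp 2 (fun i : Fin d => x i.castSucc))
      (show EuclideanSpace ℝ (Fin d) from WithLp.toLp 2 (fun i : Fin d => y i.castSucc)) ≤ dist x y := by
  rw [EuclideanSpace.dist_eq, EuclideanSpace.dist_eq]
  apply Real.sqrt_le_sqrt
  rw [Fin.sum_univ_castSucc (n := d)]
  exact le_add_of_nonneg_right (sq_nonneg _)

lemma cube_bounded {m : ℕ} (c : EuclideanSpace ℝ (Fin m)) {r : ℝ} (hr : 0 ≤ r) :
    Bornology.IsBounded (cube m c r) := by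
  apply (Metric.isBounded_closedBall (x := c) (r := Real.sqrt m * r)).subset
  intro x hx
  rw [Metric.mem_closedBall, EuclideanSpace.dist_eq]
  have hsum : ∑ i, dist (x i) (c i) ^ 2 ≤ ∑ _i : Fin m, r ^ 2 := by
    apply Finset.sum_le_sum
    intro i _
    have := hx i
    rw [Real.dist_eq]
    nlinarith [abs_nonneg (x i - c i)]
  calc Real.sqrt (∑ i, dist (x i) (c i) ^ 2) ≤ Real.sqrt (∑ _i : Fin m, r ^ 2) :=
        Real.sqrt_le_sqrt hsum
    _ = Real.sqrt (m * r ^ 2) := by rw [Finset.sum_const, Finset.card_univ]; simp [nsmul_eq_mul]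
    _ = Real.sqrt m * r := by
        rw [Real.sqrt_mul (Nat.cast_nonneg m), Real.sqrt_sq hr]

lemma center_mem_cube {m : ℕ} (c : EuclideanSpace ℝ (Fin m)) {r : ℝ} (hr : 0 ≤ r) :
    c ∈ cube m c r := fun i => by simpa using hr

lemma two_r_le_diam {m : ℕ} (c : EuclideanSpace ℝ (Fin (m+1))) {r : ℝ} (hr : 0 < r) :
    2 * r ≤ Metric.diam (cube (m+1) c r) := by
  classical
  set p : EuclideanSpace ℝ (Fin (m+1)) := WithLp.toLp 2 (fun i => c i + (if i = 0 then r else 0)) with hp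
  set q : EuclideanSpace ℝ (Fin (m+1)) := WithLp.toLp 2 (fun i => c i - (if i = 0 then r else 0)) with hq
  have hpm : p ∈ cube (m+1) c r := by
    intro i
    simp only [hp, PiLp.toLp_apply, add_sub_cancel_left]
    split <;> simp [abs_of_nonneg hr.le, hr.le]
  have hqm : q ∈ cube (m+1) c r := by
    intro i
    simp only [hq, PiLp.toLp_apply, sub_sub_cancel_left, abs_neg]
    split <;> simp [abs_of_nonneg hr.le, hr.le]
  have hdist : dist p q = 2 * r := by
    rw [EuclideanSpace.dist_eq]
    have key : ∀ i : Fin (m+1), dist (p i) (q i) ^ 2 = if i = 0 then (2*r)^2 else 0 := by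
      intro i
      simp only [hp, hq, PiLp.toLp_apply, Real.dist_eq]
      split
      · rw [show c i + r - (c i - r) = 2*r by ring, abs_of_nonneg (by linarith)]
      · simp
    rw [Finset.sum_congr rfl fun i _ => key i, Finset.sum_ite_eq' Finset.univ (0 : Fin (m+1))]
    simp [Real.sqrt_sq (by linarith : (0:ℝ) ≤ 2*r)]
  rw [← hdist]
  exact Metric.dist_le_diam_of_mem (cube_bounded c hr.le) hpm hqm

lemma sDist_le_dist' {α : Type*} [PseudoMetricSpace α] {s t : Set α} {x y : α}
    (hx : x ∈ s) (hy : y ∈ t) : sDist s t ≤ dist x y :=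
  csInf_le ⟨0, fun _ ⟨_, _, _, _, hd⟩ => hd ▸ dist_nonneg⟩ ⟨x, hx, y, hy, rfl⟩

lemma exists_sDist_lt {α : Type*} [PseudoMetricSpace α] {s t : Set α}
    (hs : s.Nonempty) (ht : t.Nonempty) {ε : ℝ} (hε : 0 < ε) :
    ∃ x ∈ s, ∃ y ∈ t, dist x y < sDist s t + ε := by
  obtain ⟨a, ⟨x, hx, y, hy, rfl⟩, hlt⟩ := Real.lt_sInf_add_pos
    (s := {d : ℝ | ∃ x ∈ s, ∃ y ∈ t, d = dist x y})
    ⟨dist hs.some ht.some, hs.some, hs.some_mem, ht.some, ht.some_mem, rfl⟩ hε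
  exact ⟨x, hx, y, hy, hlt⟩

lemma volume_slab_le (d : ℕ) (ψ : EuclideanSpace ℝ (Fin d) → ℝ) (hψ : Measurable ψ)
    (a : Fin d → ℝ) (R h : ℝ) (hR : 0 ≤ R) (hh : 0 ≤ h) :
    volume {x : EuclideanSpace ℝ (Fin (d+1)) |
        (∀ i : Fin d, |x i.castSucc - a i| ≤ R) ∧
        x (Fin.last d) ∈ Set.Ioo (ψ (WithLp.toLp 2 (fun i : Fin d => x i.castSucc)) - h) (ψ (WithLp.toLp 2 (fun i : Fin d => x i.castSucc)) + h)} ≤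
      ENNReal.ofReal ((2*R)^d * (2*h)) := by
  classical
  set e := (MeasurableEquiv.toLp 2 (Fin (d+1) → ℝ)).symm with he
  set p := MeasurableEquiv.piFinSuccAbove (fun _ : Fin (d+1) => ℝ) (Fin.last d) with hp
  set sw : ℝ × (Fin d → ℝ) ≃ᵐ (Fin d → ℝ) × ℝ := MeasurableEquiv.prodComm with hsw
  set G := (e.trans p).trans sw with hG
  set ed := (MeasurableEquiv.toLp 2 (Fin d → ℝ)).symm with hed
  set ψ' : (Fin d → ℝ) → ℝ := fun y => ψ (ed.symm y) with hψ'
  have hψ'm : Measurable ψ' := hψ.comp ed.symm.measurable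
  set A : Set (Fin d → ℝ) := Set.pi Set.univ (fun i => Icc (a i - R) (a i + R)) with hA
  have hAm : MeasurableSet A := MeasurableSet.univ_pi fun i => measurableSet_Icc
  set RB := regionBetween (fun y => ψ' y - h) (fun y => ψ' y + h) A with hRB
  have hRBm : MeasurableSet RB :=
    measurableSet_regionBetween (hψ'm.sub measurable_const) (hψ'm.add measurable_const) hAm
  have hGmp : MeasurePreserving G volume (volume.prod volume) := by
    have h1 := EuclideanSpace.volume_preserving_symm_measurableEquiv_toLp (Fin (d+1))
    have h2 := MeasureTheory.volume_preserving_piFinSuccAbove (fun _ : Fin (d+1) => ℝ) (Fin.last d)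
    have h3 : MeasurePreserving sw (volume.prod volume) (volume.prod volume) :=
      ⟨sw.measurable, Measure.prod_swap⟩
    exact (h3.comp (h2.comp h1))
  have hGx : ∀ x : EuclideanSpace ℝ (Fin (d+1)),
      G x = ((fun j => x j.castSucc : Fin d → ℝ), x (Fin.last d)) := by
    intro x
    show sw (p (e x)) = _
    have hp1 : p (e x) = (x (Fin.last d), fun j => x j.castSucc) := by
      rw [hp, MeasurableEquiv.piFinSuccAbove_apply]
      show ((e x) (Fin.last d), Fin.removeNth (Fin.last d) (e x)) = _
      refine Prod.ext rfl (funext fun j => ?_)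
      show (e x) ((Fin.last d).succAbove j) = x j.castSucc
      rw [Fin.succAbove_last]
      rfl
    rw [hp1]; rfl
  have hset : {x : EuclideanSpace ℝ (Fin (d+1)) |
        (∀ i : Fin d, |x i.castSucc - a i| ≤ R) ∧
        x (Fin.last d) ∈ Set.Ioo (ψ (WithLp.toLp 2 (fun i : Fin d => x i.castSucc)) - h) (ψ (WithLp.toLp 2 (fun i : Fin d => x i.castSucc)) + h)}
      = G ⁻¹' RB := by
    ext x
    simp only [mem_setOf_eq, mem_preimage, hGx x, hRB, regionBetween, mem_setOf_eq, hA,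
      mem_pi, mem_univ, true_implies, mem_Icc, mem_Ioo, abs_le]
    have hr : ψ' (fun j => x j.castSucc) = ψ (WithLp.toLp 2 (fun i : Fin d => x i.castSucc)) := rfl
    rw [hr]
    constructor
    · rintro ⟨h1, h2⟩
      exact ⟨fun i => ⟨by linarith [(h1 i).1], by linarith [(h1 i).2]⟩, h2⟩
    · rintro ⟨h1, h2⟩
      exact ⟨fun i => ⟨by linarith [(h1 i).1], by linarith [(h1 i).2]⟩, h2⟩
  rw [hset, hGmp.measure_preimage hRBm.nullMeasurableSet, hRB]
  rw [volume_regionBetween_eq_lintegral' (f := fun y => ψ' y - h) (g := fun y => ψ' y + h) (hψ'm.sub measurable_const)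
    (hψ'm.add measurable_const) hAm]
  have hcalc : ∫⁻ y in A, ENNReal.ofReal
      (((fun y => ψ' y + h) - fun y => ψ' y - h) y) = ENNReal.ofReal (2*h) * volume A := by
    have hfun : ∀ y, ((fun y => ψ' y + h) - fun y => ψ' y - h) y = 2*h := by
      intro y; simp [Pi.sub_apply]; ring
    simp only [hfun]
    rw [MeasureTheory.setLIntegral_const]
  rw [hcalc]
  have hvolA : volume A = (ENNReal.ofReal (2*R))^d := by
    rw [hA, volume_pi_pi]
    have hIcc : ∀ i : Fin d, volume (Icc (a i - R) (a i + R)) = ENNReal.ofReal (2*R) := by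
      intro i; rw [Real.volume_Icc]; ring_nf
    simp only [hIcc, Finset.prod_const, Finset.card_univ, Fintype.card_fin]
  rw [hvolA, ← ENNReal.ofReal_pow (by linarith), ← ENNReal.ofReal_mul (by positivity)]
  rw [mul_comm]

end Aux

set_option maxHeartbeats 1000000 in
/-- Lemma 2.6: `|F^{s,j}_{Q_k}| ≤ C 2^{(-s₀+j)(n-1) - s}` with `C = C(n, K)`. -/
theorem measure_Fsj (d : ℕ) (K : ℝ) (hK : 0 ≤ K) :
    ∃ C : ℝ, 0 < C ∧
      ∀ (Ω : Set (EuclideanSpace ℝ (Fin (d + 1)))) (φ : EuclideanSpace ℝ (Fin d) → ℝ)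
        (c : ℕ → EuclideanSpace ℝ (Fin (d + 1))) (r : ℕ → ℝ),
        IsLipGraphDomain d K Ω φ → φ 0 = 0 →
        (0 : EuclideanSpace ℝ (Fin (d + 1))) ∈ frontier Ω →
        IsWhitneyOf (d + 1) (Ω ∩ ball 0 1) c r →
        ∀ (s₀ : ℤ), 2 ≤ s₀ → ∀ k, memF d Ω c r s₀ k →
        ∀ (s : ℤ), 2 ≤ s → ∀ j : ℕ,
          volume (⋃ l ∈ {l : ℕ | memFsj d Ω c r s₀ k s j l}, cube (d + 1) (c l) (r l)) ≤
            ENNReal.ofReal (C * (2 : ℝ) ^ ((-s₀ + (j : ℤ)) * d - s)) := by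
  classical
  refine ⟨512^d * (24*(1+K)), by positivity, ?_⟩
  intro Ω φ c r hLip hφ0 h0f hW s₀ hs₀ k hk s hs j
  obtain ⟨hr, hcov, hdisj, hWd⟩ := hW
  -- Lipschitz extension of φ
  have hlipOn : LipschitzOnWith (⟨K, hK⟩ : NNReal) φ (ball 0 1) := by
    refine LipschitzOnWith.of_dist_le_mul ?_
    intro x hx y hy
    rw [Real.dist_eq]
    exact hLip.2.1 x hx y hy
  obtain ⟨ψ, hψlip, hψeq⟩ := hlipOn.extend_real
  have hψm : Measurable ψ := hψlip.continuous.measurable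
  set δ : ℝ := (2:ℝ)^(-s) with hδ
  set ρ : ℝ := (2:ℝ)^(-s₀+(j:ℤ)) with hρ
  have hδpos : 0 < δ := by positivity
  have hρpos : 0 < ρ := by positivity
  have hρs₀ : (2:ℝ)^(-s₀) ≤ ρ := zpow_le_zpow_right₀ one_le_two (show -s₀ ≤ -s₀ + (j:ℤ) by omega)
  have h32 : (2:ℝ)^(-s₀+(j:ℤ)+5) = 32*ρ := by
    rw [zpow_add₀ (two_ne_zero), hρ]; norm_num; ring
  have hδhalf : (2:ℝ)^(-s-1) = δ/2 := by
    rw [zpow_sub₀ (two_ne_zero), hδ]; norm_num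
  have hδ4 : δ ≤ 1/4 := by
    have h1 : (2:ℝ)^(-s) ≤ (2:ℝ)^(-2:ℤ) := zpow_le_zpow_right₀ one_le_two (show -s ≤ (-2:ℤ) by omega)
    have h2 : (2:ℝ)^(-2:ℤ) = 1/4 := by norm_num
    rw [hδ]
    exact le_of_le_of_eq h1 h2
  -- the target slab
  set x'k : Fin d → ℝ := fun i => (c k) i.castSucc with hx'k
  set h' : ℝ := 12*(1+K)*δ with hh'
  have hh'pos : 0 < h' := by positivity
  set T := {x : EuclideanSpace ℝ (Fin (d+1)) |
        (∀ i : Fin d, |x i.castSucc - x'k i| ≤ 256*ρ) ∧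
        x (Fin.last d) ∈ Set.Ioo (ψ (WithLp.toLp 2 (fun i : Fin d => x i.castSucc)) - h')
          (ψ (WithLp.toLp 2 (fun i : Fin d => x i.castSucc)) + h')} with hT
  have hsubset : (⋃ l ∈ {l : ℕ | memFsj d Ω c r s₀ k s j l}, cube (d + 1) (c l) (r l)) ⊆ T := by
    intro x hx
    rw [mem_iUnion₂] at hx
    obtain ⟨l, hl, hxl⟩ := hx
    obtain ⟨⟨hld1, hld2, hlsub⟩, hldist⟩ := hl
    set Ql := cube (d+1) (c l) (r l) with hQl
    set Qk := cube (d+1) (c k) (r k) with hQk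
    set Fr := frontier (Ω ∩ ball 0 1) with hFr
    have hbl : Bornology.IsBounded Ql := cube_bounded _ (hr l).le
    have hbk : Bornology.IsBounded Qk := cube_bounded _ (hr k).le
    have hQlne : Ql.Nonempty := ⟨c l, center_mem_cube _ (hr l).le⟩
    have hQkne : Qk.Nonempty := ⟨c k, center_mem_cube _ (hr k).le⟩
    have hQlsub : Ql ⊆ Ω ∩ ball 0 (1/4) := by
      intro y hy
      exact hlsub (fun i => le_trans (hy i) (by nlinarith [hr l]))
    have hxΩ : x ∈ Ω ∩ ball 0 (1/4) := hQlsub hxl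
    have hx14 : dist x 0 < 1/4 := mem_ball.1 hxΩ.2
    have hx1 : x ∈ ball (0 : EuclideanSpace ℝ (Fin (d+1))) 1 :=
      mem_ball.2 (lt_of_lt_of_le hx14 (by norm_num))
    set x' : EuclideanSpace ℝ (Fin d) := WithLp.toLp 2 (fun i : Fin d => x i.castSucc) with hx'
    have hx'14 : dist x' 0 < 1/4 :=
      lt_of_le_of_lt (proj_dist_le_dist x 0) hx14
    have hx'ball : x' ∈ ball (0 : EuclideanSpace ℝ (Fin d)) 1 :=
      mem_ball.2 (lt_of_lt_of_le hx'14 (by norm_num))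
    -- φ x' < x last
    have hφlt : φ x' < x (Fin.last d) := by
      have hmem : x ∈ {y : EuclideanSpace ℝ (Fin (d+1)) |
          φ (WithLp.toLp 2 (fun i : Fin d => y i.castSucc)) < y (Fin.last d)} ∩ ball 0 1 := by
        rw [← hLip.2.2.1]; exact ⟨hxΩ.1, hx1⟩
      exact hmem.1
    -- distance from Ql to Qk
    have hsdlk : sDist Ql Qk ≤ 32*ρ := by
      by_cases hj : j = 0
      · rw [if_pos hj] at hldist
        refine le_trans hldist ?_
        rw [← h32, hj]
        norm_num
      · rw [if_neg hj] at hldist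
        exact h32 ▸ hldist.2
    -- frontier nonempty
    have hFrne : Fr.Nonempty := by
      rcases eq_empty_or_nonempty Fr with hFre | hFre
      · exfalso
        have hset0 : {d : ℝ | ∃ a ∈ Ql, ∃ b ∈ Fr, d = dist a b} = ∅ := by
          simp [hFre]
        have hzero : sDist Ql Fr = 0 := by
          rw [sDist, hset0, Real.sInf_empty]
        have h1 : Metric.diam Ql ≤ sDist Ql Fr := (hWd l).1
        have h2 : 2 * r l ≤ Metric.diam Ql := two_r_le_diam (c l) (hr l)
        rw [hzero] at h1
        linarith [hr l]
      · exact hFre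
    -- points realizing sDist Ql Qk and sDist Qk Fr
    obtain ⟨x₂, hx₂, y₂, hy₂, hd₂⟩ := exists_sDist_lt hQlne hQkne hρpos
    obtain ⟨y₃, hy₃, w₃, hw₃, hd₃⟩ := exists_sDist_lt hQkne hFrne hρpos
    have hsdQk : sDist Qk Fr ≤ 4*ρ := by
      refine le_trans (hWd k).2 ?_
      have := hk.2.1
      have h4 : Metric.diam Qk ≤ (2:ℝ)^(-s₀) := this
      nlinarith
    have hsdQl : Metric.diam Ql ≤ sDist Ql Fr := (hWd l).1
    have hdiaml : Metric.diam Ql ≤ δ := hld2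
    have hdiamk : Metric.diam Qk ≤ ρ := le_trans hk.2.1 hρs₀
    have hdy23 : dist y₂ y₃ ≤ ρ := le_trans (Metric.dist_le_diam_of_mem hbk hy₂ hy₃) hdiamk
    -- δ ≤ 78 ρ
    have hδρ : δ ≤ 78*ρ := by
      have ht4 : dist x₂ w₃ ≤ dist x₂ y₂ + dist y₂ y₃ + dist y₃ w₃ := dist_triangle4 _ _ _ _
      have hl1 : sDist Ql Fr ≤ dist x₂ w₃ := sDist_le_dist' hx₂ hw₃
      have hl2 : δ/2 < Metric.diam Ql := hδhalf ▸ hld1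
      linarith
    -- dist x (c k) ≤ 256 ρ
    have hdistck : dist x (c k) ≤ 256*ρ := by
      have ht4 : dist x (c k) ≤ dist x x₂ + dist x₂ y₂ + dist y₂ (c k) := dist_triangle4 _ _ _ _
      have hxx₂ : dist x x₂ ≤ δ := le_trans (Metric.dist_le_diam_of_mem hbl hxl hx₂) hdiaml
      have hy₂ck : dist y₂ (c k) ≤ ρ :=
        le_trans (Metric.dist_le_diam_of_mem hbk hy₂ (center_mem_cube _ (hr k).le)) hdiamk
      linarith
    -- vertical bound
    have hvert : x (Fin.last d) - φ x' ≤ 6*(1+K)*δ := by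
      by_cases hδ8 : δ ≤ 1/8
      · -- use a nearby frontier point
        have hsdlF : sDist Ql Fr ≤ 4*δ := le_trans (hWd l).2 (by linarith)
        obtain ⟨x₄, hx₄, w, hw, hdw⟩ := exists_sDist_lt hQlne hFrne (by linarith : (0:ℝ) < δ/2)
        have hdxw : dist x w ≤ 11/2*δ := by
          have h1 : dist x w ≤ dist x x₄ + dist x₄ w := dist_triangle _ _ _
          have h2 : dist x x₄ ≤ δ := le_trans (Metric.dist_le_diam_of_mem hbl hxl hx₄) hdiaml
          linarith
        have hwball : w ∈ ball (0 : EuclideanSpace ℝ (Fin (d+1))) 1 := by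
          rw [mem_ball]
          calc dist w 0 ≤ dist w x + dist x 0 := dist_triangle _ _ _
            _ < 11/2*δ + 1/4 := by rw [dist_comm w x]; exact add_lt_add_of_le_of_lt hdxw hx14
            _ ≤ 11/2*(1/8) + 1/4 := by linarith
            _ < 1 := by norm_num
        have hwfr : w ∈ frontier Ω := by
          rcases frontier_inter_subset Ω (ball (0 : EuclideanSpace ℝ (Fin (d+1))) 1) hw with
            hcase | hcase
          · exact hcase.1
          · exfalso
            have := hcase.2
            rw [frontier_ball (0 : EuclideanSpace ℝ (Fin (d+1))) (one_ne_zero)] at this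
            rw [mem_sphere] at this
            rw [mem_ball] at hwball
            linarith
        have hwgraph : w (Fin.last d) = φ (WithLp.toLp 2 (fun i : Fin d => w i.castSucc)) := by
          have hmem : w ∈ {y : EuclideanSpace ℝ (Fin (d+1)) |
              y (Fin.last d) = φ (WithLp.toLp 2 (fun i : Fin d => y i.castSucc))} ∩ ball 0 1 := by
            rw [← hLip.2.2.2]; exact ⟨hwfr, hwball⟩
          exact hmem.1
        set w' : EuclideanSpace ℝ (Fin d) := WithLp.toLp 2 (fun i : Fin d => w i.castSucc) with hw'
        have hw'ball : w' ∈ ball (0 : EuclideanSpace ℝ (Fin d)) 1 := by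
          rw [mem_ball]
          exact lt_of_le_of_lt (proj_dist_le_dist w 0) (mem_ball.1 hwball)
        have hlipwx : |φ w' - φ x'| ≤ K * dist w' x' := hLip.2.1 w' hw'ball x' hx'ball
        have hcoordlast : |x (Fin.last d) - w (Fin.last d)| ≤ dist x w :=
          coord_abs_le_dist x w (Fin.last d)
        have hprojwx : dist w' x' ≤ dist w x := proj_dist_le_dist w x
        have hKdist : K * dist w' x' ≤ K * dist x w := by
          rw [dist_comm x w]; exact mul_le_mul_of_nonneg_left hprojwx hK
        have h1 : x (Fin.last d) - w (Fin.last d) ≤ dist x w :=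
          le_trans (le_abs_self _) hcoordlast
        have h2 : φ w' - φ x' ≤ K * dist x w :=
          le_trans (le_trans (le_abs_self _) hlipwx) hKdist
        have : x (Fin.last d) - φ x' =
            (x (Fin.last d) - w (Fin.last d)) + (φ w' - φ x') := by
          rw [hwgraph]; ring
        rw [this]
        have h3 : K * dist x w ≤ K * (11/2*δ) := mul_le_mul_of_nonneg_left hdxw hK
        have h4 : 0 ≤ K * δ := mul_nonneg hK hδpos.le
        linarith
      · -- δ > 1/8 : crude bound
        push_neg at hδ8
        have hxlast : x (Fin.last d) ≤ 1/4 := by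
          have h1 : |x (Fin.last d) - (0 : EuclideanSpace ℝ (Fin (d+1))) (Fin.last d)| ≤
              dist x 0 := coord_abs_le_dist x 0 (Fin.last d)
          have h0 : (0 : EuclideanSpace ℝ (Fin (d+1))) (Fin.last d) = 0 := rfl
          rw [h0, sub_zero] at h1
          linarith [le_abs_self (x (Fin.last d))]
        have hφlow : -(K/4) ≤ φ x' := by
          have h0ball : (0 : EuclideanSpace ℝ (Fin d)) ∈ ball (0 : EuclideanSpace ℝ (Fin d)) 1 :=
            mem_ball_self one_pos
          have := hLip.2.1 x' hx'ball 0 h0ball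
          rw [hφ0, sub_zero] at this
          have hd14 : dist x' (0 : EuclideanSpace ℝ (Fin d)) ≤ 1/4 := hx'14.le
          have hK4 : K * dist x' (0 : EuclideanSpace ℝ (Fin d)) ≤ K/4 := by
            have := mul_le_mul_of_nonneg_left hd14 hK
            linarith
          have habs : |φ x'| ≤ K/4 := le_trans this hK4
          linarith [neg_abs_le (φ x')]
        have h5 : 6*(1+K)*(1/8) ≤ 6*(1+K)*δ :=
          mul_le_mul_of_nonneg_left hδ8.le (by linarith : (0:ℝ) ≤ 6*(1+K))
        linarith
    -- assemble membership in T
    rw [hT]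
    refine ⟨fun i => ?_, ?_, ?_⟩
    · exact le_trans (coord_abs_le_dist x (c k) i.castSucc) hdistck
    · have : ψ (WithLp.toLp 2 (fun i : Fin d => x i.castSucc)) = φ x' := (hψeq hx'ball).symm
      rw [this]
      linarith
    · have : ψ (WithLp.toLp 2 (fun i : Fin d => x i.castSucc)) = φ x' := (hψeq hx'ball).symm
      rw [this]
      have h6 : 6*(1+K)*δ < h' := by
        rw [hh']
        have hpos : 0 < (1+K)*δ := mul_pos (by linarith) hδpos
        linarith
      linarith
  refine le_trans (measure_mono hsubset) ?_
  refine le_trans (volume_slab_le d ψ hψm x'k (256*ρ) h' (by positivity) hh'pos.le) ?_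
  apply ENNReal.ofReal_le_ofReal
  apply le_of_eq
  have hpow : (2:ℝ)^((-s₀+(j:ℤ))*(d:ℤ) - s) = ρ^d * δ := by
    rw [sub_eq_add_neg, zpow_add₀ (two_ne_zero), zpow_mul, zpow_natCast, hρ, hδ, zpow_neg]
  calc (2*(256*ρ))^d * (2*h') = 512^d * (24*(1+K)) * (ρ^d * δ) := by
        rw [hh']; rw [show 2*(256*ρ) = 512*ρ by ring, mul_pow]; ring
    _ = 512^d * (24*(1+K)) * (2:ℝ)^((-s₀+(j:ℤ))*(d:ℤ) - s) := by rw [hpow]
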